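/- arXiv:math/0609011 — 2 statements merged into one kernel-verified Lean document; each statement's English description precedes it below -/
import Mathlib

section
/- If N(ω) is a random isolating block for the random homeomorphism φ and ψ is a random homeomorphism with sup_{x∈N(θ_{−1}ω)} d(φ(θ_{−1}ω,x), ψ(θ_{−1}ω,x)) + sup_{y∈N(θω)} d(φ⁻¹(θω,y), ψ⁻¹(θω,y)) sufficiently small for each ω, then N(ω) is also a random isolating block for ψ. -/
/-- Robustness of random isolating blocks under small random `C⁰`
perturbations: if `N` is a random isolating block for `φ`, then there is
`ε(ω) > 0` such that every random homeomorphism `ψ` with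
`sup_{x ∈ N(θ₋₁ω)} d(φ(θ₋₁ω,x), ψ(θ₋₁ω,x)) +
 sup_{y ∈ N(θω)} d(φ⁻¹(θω,y), ψ⁻¹(θω,y)) < ε(ω)` for each `ω`
also admits `N` as a random isolating block. -/
theorem isolating_block_robust
    {Ω X : Type*} [MetricSpace X] [LocallyCompactSpace X]
    (θ : Ω → Ω) (θinv : Ω → Ω)
    (hθ : ∀ ω, θinv (θ ω) = ω ∧ θ (θinv ω) = ω)
    (φ : Ω → X → X) (φinv : Ω → X → X)
    (hφcont : ∀ ω, Continuous (φ ω))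
    (hφ : ∀ ω, Function.LeftInverse (φinv ω) (φ ω) ∧
      Function.RightInverse (φinv ω) (φ ω))
    (N : Ω → Set X) (hN : ∀ ω, IsCompact (N ω))
    (hblock : ∀ ω,
      φ (θinv ω) '' N (θinv ω) ∩ N ω ∩ φinv ω '' N (θ ω) ⊆ interior (N ω)) :
    ∃ ε : Ω → ℝ, (∀ ω, 0 < ε ω) ∧
      ∀ (ψ : Ω → X → X) (ψinv : Ω → X → X),
        (∀ ω, Continuous (ψ ω)) →
        (∀ ω, Function.LeftInverse (ψinv ω) (ψ ω) ∧
          Function.RightInverse (ψinv ω) (ψ ω)) →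
        (∀ ω,
          sSup ((fun x => dist (φ (θinv ω) x) (ψ (θinv ω) x)) '' N (θinv ω)) +
          sSup ((fun y => dist (φinv ω y) (ψinv ω y)) '' N (θ ω)) < ε ω) →
        ∀ ω, ψ (θinv ω) '' N (θinv ω) ∩ N ω ∩ ψinv ω '' N (θ ω)
          ⊆ interior (N ω) := by
  classical
  -- Key: a positive lower bound for
  -- `z ↦ infDist z (φ '' N₋) + infDist (φ ω z) N₊` on `N ω \ interior (N ω)`.
  have key : ∀ ω, ∃ e : ℝ, 0 < e ∧ ((N (θinv ω)).Nonempty → (N (θ ω)).Nonempty →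
      ∀ z ∈ N ω \ interior (N ω),
        e ≤ Metric.infDist z (φ (θinv ω) '' N (θinv ω)) +
            Metric.infDist (φ ω z) (N (θ ω))) := by
    intro ω
    by_cases h1 : (N (θinv ω)).Nonempty
    swap
    · exact ⟨1, one_pos, fun h _ _ _ => absurd h h1⟩
    by_cases h2 : (N (θ ω)).Nonempty
    swap
    · exact ⟨1, one_pos, fun _ h _ _ => absurd h h2⟩
    set S1 := φ (θinv ω) '' N (θinv ω) with hS1
    have hS1c : IsCompact S1 := (hN _).image (hφcont _)
    set f : X → ℝ := fun z => Metric.infDist z S1 + Metric.infDist (φ ω z) (N (θ ω))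
      with hf
    have hfcont : Continuous f :=
      (Metric.continuous_infDist_pt S1).add
        ((Metric.continuous_infDist_pt (N (θ ω))).comp (hφcont ω))
    set C := N ω \ interior (N ω) with hC
    have hCc : IsCompact C := (hN ω).diff isOpen_interior
    by_cases hCne : C.Nonempty
    · obtain ⟨z0, hz0, hmin⟩ := hCc.exists_isMinOn hCne hfcont.continuousOn
      refine ⟨f z0, ?_, fun _ _ z hz => hmin hz⟩
      have h0 : 0 ≤ f z0 := add_nonneg Metric.infDist_nonneg Metric.infDist_nonneg
      rcases lt_or_eq_of_le h0 with h | h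
      · exact h
      · exfalso
        have hn1 : 0 ≤ Metric.infDist z0 S1 := Metric.infDist_nonneg
        have hn2 : 0 ≤ Metric.infDist (φ ω z0) (N (θ ω)) := Metric.infDist_nonneg
        have hd1 : Metric.infDist z0 S1 = 0 := by
          have := h.symm
          simp only [hf] at this
          linarith
        have hd2 : Metric.infDist (φ ω z0) (N (θ ω)) = 0 := by
          have := h.symm
          simp only [hf] at this
          linarith
        have hz1 : z0 ∈ S1 := (hS1c.isClosed.mem_iff_infDist_zero (h1.image _)).2 hd1
        have hz2 : φ ω z0 ∈ N (θ ω) :=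
          ((hN (θ ω)).isClosed.mem_iff_infDist_zero h2).2 hd2
        have hz3 : z0 ∈ φinv ω '' N (θ ω) := ⟨φ ω z0, hz2, (hφ ω).1 z0⟩
        exact hz0.2 (hblock ω ⟨⟨hz1, hz0.1⟩, hz3⟩)
    · exact ⟨1, one_pos, fun _ _ z hz => absurd ⟨z, hz⟩ hCne⟩
  choose e hepos he using key
  refine ⟨fun ω => min (e ω) (e (θinv ω)) / 2,
    fun ω => by
      have := hepos ω; have := hepos (θinv ω)
      have : 0 < min (e ω) (e (θinv ω)) := lt_min ‹0 < e ω› ‹0 < e (θinv ω)›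
      linarith, ?_⟩
  intro ψ ψinv hψcont hψ hsmall ω z hz
  obtain ⟨⟨⟨x, hx, hxz⟩, hzN⟩, y, hy, hyz⟩ := hz
  by_contra hint
  have hzC : z ∈ N ω \ interior (N ω) := ⟨hzN, hint⟩
  have hkey := he ω ⟨x, hx⟩ ⟨y, hy⟩ z hzC
  -- First estimate: `infDist z S1 ≤ sSup (first term at ω) < min (e ω) _ / 2`.
  have b1 : Metric.infDist z (φ (θinv ω) '' N (θinv ω)) ≤
      sSup ((fun x => dist (φ (θinv ω) x) (ψ (θinv ω) x)) '' N (θinv ω)) := by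
    calc Metric.infDist z (φ (θinv ω) '' N (θinv ω)) ≤ dist z (φ (θinv ω) x) :=
          Metric.infDist_le_dist_of_mem ⟨x, hx, rfl⟩
      _ = dist (φ (θinv ω) x) (ψ (θinv ω) x) := by rw [← hxz, dist_comm]
      _ ≤ _ := le_csSup
          (((hN _).image ((hφcont _).dist (hψcont _))).bddAbove) ⟨x, hx, rfl⟩
  have nn2 : 0 ≤ sSup ((fun y => dist (φinv ω y) (ψinv ω y)) '' N (θ ω)) :=
    Real.sSup_nonneg (by rintro _ ⟨u, _, rfl⟩; exact dist_nonneg)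
  have b1' : Metric.infDist z (φ (θinv ω) '' N (θinv ω)) < min (e ω) (e (θinv ω)) / 2 := by
    have := hsmall ω
    linarith
  have hb1e : Metric.infDist z (φ (θinv ω) '' N (θinv ω)) < e ω / 2 :=
    lt_of_lt_of_le b1' (by
      have : min (e ω) (e (θinv ω)) ≤ e ω := min_le_left _ _
      linarith)
  -- Second estimate, via `hsmall (θ ω)`: `ψ z ∈ N (θ ω)` and
  -- `dist (φ ω z) (ψ ω z) ≤ sSup (first term at θ ω) < e ω / 2`.
  have hψz : ψ ω z = y := by rw [← hyz]; exact (hψ ω).2 y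
  have hψzN : ψ ω z ∈ N (θ ω) := by rw [hψz]; exact hy
  have b2 : Metric.infDist (φ ω z) (N (θ ω)) ≤
      sSup ((fun x => dist (φ ω x) (ψ ω x)) '' N ω) := by
    calc Metric.infDist (φ ω z) (N (θ ω)) ≤ dist (φ ω z) (ψ ω z) :=
          Metric.infDist_le_dist_of_mem hψzN
      _ ≤ _ := le_csSup
          (((hN ω).image ((hφcont ω).dist (hψcont ω))).bddAbove) ⟨z, hzN, rfl⟩
  have hsmallθ := hsmall (θ ω)
  simp only [(hθ ω).1] at hsmallθ
  have nn2' : 0 ≤ sSup ((fun y => dist (φinv (θ ω) y) (ψinv (θ ω) y)) '' N (θ (θ ω))) :=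
    Real.sSup_nonneg (by rintro _ ⟨u, _, rfl⟩; exact dist_nonneg)
  have hb2e : Metric.infDist (φ ω z) (N (θ ω)) < e ω / 2 := by
    have hmin : min (e (θ ω)) (e ω) / 2 ≤ e ω / 2 := by
      have : min (e (θ ω)) (e ω) ≤ e ω := min_le_right _ _
      linarith
    linarith
  linarith
end

section
/- The random pointed space map φ_P associated with a filtration pair is continuous: if P = (N,L) is a filtration pair (in particular φ(ω,L(ω)) ∩ cl(N(θω)\L(θω)) = ∅), then the induced map φ_P(ω,·) : N(ω)/L(ω) → N(θω)/L(θω), sending [L(ω)] ↦ [L(θω)], x ↦ [L(θω)] if φ(ω,x) ∉ N(θω), and x ↦ p(θω, φ(ω,x)) otherwise, is continuous and preserves the base point; moreover the base point [L(ω)] lies in the interior of φ_P(ω,·)⁻¹([L(θω)]). -/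
/-- The setoid on `N` (as a subtype) collapsing the subset `L` to a point. -/
def collapseSetoid {X : Type*} (N L : Set X) : Setoid ↥N where
  r x y := x = y ∨ ((x : X) ∈ L ∧ (y : X) ∈ L)
  iseqv := by
    constructor
    · intro x; exact Or.inl rfl
    · rintro x y (rfl | ⟨hx, hy⟩)
      · exact Or.inl rfl
      · exact Or.inr ⟨hy, hx⟩
    · rintro x y z (rfl | ⟨hx, hy⟩) (rfl | ⟨hy', hz⟩)
      · exact Or.inl rfl
      · exact Or.inr ⟨hy', hz⟩
      · exact Or.inr ⟨hx, hy⟩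
      · exact Or.inr ⟨hx, hz⟩

/-- The pointed quotient space `N/L` with the quotient topology. -/
def pointedQuotient {X : Type*} [TopologicalSpace X] (N L : Set X) : Type _ :=
  Quotient (collapseSetoid N L)

instance {X : Type*} [TopologicalSpace X] (N L : Set X) :
    TopologicalSpace (pointedQuotient N L) :=
  instTopologicalSpaceQuotient

open Topology Filter

/-- For a random filtration pair `P = (N,L)` (in particular
`φ(ω,L(ω)) ∩ cl(N(θω)\L(θω)) = ∅`), the induced random pointed space map
`φ_P(ω,·) : N(ω)/L(ω) → N(θω)/L(θω)` (sending the base point to the base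
point, `x ↦ [L(θω)]` when `φ(ω,x) ∉ N(θω)`, and `x ↦ [φ(ω,x)]` otherwise) is
continuous, preserves the base point, and the base point lies in the interior
of `φ_P(ω,·)⁻¹([L(θω)])`. -/
theorem pointed_space_map_continuous
    {Ω X : Type*} [TopologicalSpace X]
    (θ : Ω → Ω) (φ : Ω → X → X)
    (hφcont : ∀ ω, Continuous (φ ω))
    (hφhomeo : ∀ ω, IsHomeomorph (φ ω))
    (N : Ω → Set X) (hN : ∀ ω, IsCompact (N ω))
    (L : Ω → Set X) (hL : ∀ ω, IsCompact (L ω))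
    (hLN : ∀ ω, L ω ⊆ N ω)
    -- the key filtration-pair condition
    (hfp : ∀ ω, φ ω '' L ω ∩ closure (N (θ ω) \ L (θ ω)) = ∅)
    -- `L` is a neighborhood of the exit set in `N`
    (hLnbhd : ∀ ω, ∀ x ∈ {x ∈ N ω | φ ω x ∉ interior (N (θ ω))},
      L ω ∈ nhdsWithin x (N ω))
    -- a choice of base point of the collapsed set
    (l : ∀ ω, X) (hl : ∀ ω, l ω ∈ L ω)
    -- the random pointed space map `φ_P`
    (φP : ∀ ω, pointedQuotient (N ω) (L ω) → pointedQuotient (N (θ ω)) (L (θ ω)))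
    (hφP₁ : ∀ ω (x : X) (hx : x ∈ N ω) (h : φ ω x ∈ N (θ ω)),
      φP ω (Quotient.mk (collapseSetoid (N ω) (L ω)) ⟨x, hx⟩)
        = Quotient.mk (collapseSetoid (N (θ ω)) (L (θ ω))) ⟨φ ω x, h⟩)
    (hφP₂ : ∀ ω (x : X) (hx : x ∈ N ω), φ ω x ∉ N (θ ω) →
      φP ω (Quotient.mk (collapseSetoid (N ω) (L ω)) ⟨x, hx⟩)
        = Quotient.mk (collapseSetoid (N (θ ω)) (L (θ ω)))
            ⟨l (θ ω), hLN (θ ω) (hl (θ ω))⟩) :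
    ∀ ω, Continuous (φP ω) ∧
      φP ω (Quotient.mk (collapseSetoid (N ω) (L ω)) ⟨l ω, hLN ω (hl ω)⟩)
        = Quotient.mk (collapseSetoid (N (θ ω)) (L (θ ω)))
            ⟨l (θ ω), hLN (θ ω) (hl (θ ω))⟩ ∧
      Quotient.mk (collapseSetoid (N ω) (L ω)) ⟨l ω, hLN ω (hl ω)⟩
        ∈ interior ((φP ω) ⁻¹'
            {Quotient.mk (collapseSetoid (N (θ ω)) (L (θ ω)))
              ⟨l (θ ω), hLN (θ ω) (hl (θ ω))⟩}) := by
  intro ω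
  classical
  set Q' := pointedQuotient (N (θ ω)) (L (θ ω))
  set q : ↥(N ω) → pointedQuotient (N ω) (L ω) :=
    Quotient.mk (collapseSetoid (N ω) (L ω)) with hq
  set q' : ↥(N (θ ω)) → Q' := Quotient.mk (collapseSetoid (N (θ ω)) (L (θ ω))) with hq'
  set b' : Q' := q' ⟨l (θ ω), hLN (θ ω) (hl (θ ω))⟩ with hb'
  -- images of points of `L ω` that land in `N (θ ω)` land in `L (θ ω)`
  have himg : ∀ y ∈ L ω, φ ω y ∉ closure (N (θ ω) \ L (θ ω)) := by
    intro y hy hcl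
    have : φ ω y ∈ φ ω '' L ω ∩ closure (N (θ ω) \ L (θ ω)) := ⟨⟨y, hy, rfl⟩, hcl⟩
    rw [hfp ω] at this
    exact this
  have hLL : ∀ y ∈ L ω, ∀ h : φ ω y ∈ N (θ ω), φ ω y ∈ L (θ ω) := by
    intro y hy h
    by_contra hnot
    exact himg y hy (subset_closure ⟨h, hnot⟩)
  -- the lift `F` of `φP ω` to the subtype
  set F : ↥(N ω) → Q' := fun x =>
    if h : φ ω (x : X) ∈ N (θ ω) then q' ⟨φ ω (x : X), h⟩ else b' with hF
  have hcomp : ∀ x : ↥(N ω), φP ω (q x) = F x := by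
    rintro ⟨x, hx⟩
    by_cases h : φ ω x ∈ N (θ ω)
    · rw [hF]; simp only [dif_pos h]; exact hφP₁ ω x hx h
    · rw [hF]; simp only [dif_neg h]; exact hφP₂ ω x hx h
  -- on points mapping outside `closure (N' \ L')`, the value of `F` is the base point
  have hFbase : ∀ x : ↥(N ω), φ ω (x : X) ∉ closure (N (θ ω) \ L (θ ω)) → F x = b' := by
    intro x hx
    by_cases h : φ ω (x : X) ∈ N (θ ω)
    · have hmem : φ ω (x : X) ∈ L (θ ω) := by
        by_contra hnot
        exact hx (subset_closure ⟨h, hnot⟩)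
      rw [hF]; simp only [dif_pos h]
      exact Quotient.sound (Or.inr ⟨hmem, hl (θ ω)⟩)
    · rw [hF]; simp only [dif_neg h]
  -- continuity of `F`
  have hFcont : Continuous F := by
    rw [continuous_iff_continuousAt]
    intro x
    by_cases hx : φ ω (x : X) ∈ interior (N (θ ω))
    · -- near `x`, `F` is the composition with the quotient map
      set O : Set ↥(N ω) := (fun y : ↥(N ω) => φ ω (y : X)) ⁻¹' interior (N (θ ω)) with hO
      have hOopen : IsOpen O :=
        (isOpen_interior.preimage ((hφcont ω).comp continuous_subtype_val))
      have hcO : ContinuousOn F O := by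
        rw [continuousOn_iff_continuous_restrict]
        have : O.domRestrict F = fun y : O =>
            q' ⟨φ ω ((y : ↥(N ω)) : X), interior_subset y.2⟩ := by
          funext y
          simp only [Set.domRestrict_apply, hF]
          rw [dif_pos (interior_subset y.2)]
        rw [this]
        exact (continuous_quot_mk : Continuous q').comp
          (((hφcont ω).comp (continuous_subtype_val.comp continuous_subtype_val)).subtype_mk _)
      exact hcO.continuousAt (hOopen.mem_nhds hx)
    · -- `x` is in the exit-neighborhood region: `F` is eventually constant
      have hxN : (x : X) ∈ {z ∈ N ω | φ ω z ∉ interior (N (θ ω))} := ⟨x.2, hx⟩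
      have hLmem : L ω ∈ nhdsWithin (x : X) (N ω) := hLnbhd ω _ hxN
      have hpre : (Subtype.val ⁻¹' L ω : Set ↥(N ω)) ∈ 𝓝 x :=
        preimage_coe_mem_nhds_subtype.2 hLmem
      have hxL : (x : X) ∈ L ω := mem_of_mem_nhdsWithin x.2 hLmem
      have heq : F =ᶠ[𝓝 x] fun _ => b' := by
        filter_upwards [hpre] with y hy
        exact hFbase y (himg _ hy)
      exact heq.continuousAt
  -- continuity of `φP ω`
  have hqm : IsQuotientMap q := isQuotientMap_quot_mk
  have hPcont : Continuous (φP ω) := by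
    rw [hqm.continuous_iff]
    have : φP ω ∘ q = F := funext fun x => hcomp x
    rw [this]
    exact hFcont
  refine ⟨hPcont, ?_, ?_⟩
  · exact hcomp ⟨l ω, hLN ω (hl ω)⟩ |>.trans (hFbase _ (himg _ (hl ω)))
  · -- interior statement
    set K : Set ↥(N ω) :=
      (fun y : ↥(N ω) => φ ω (y : X)) ⁻¹' closure (N (θ ω) \ L (θ ω)) with hK
    have hKclosed : IsClosed K :=
      isClosed_closure.preimage ((hφcont ω).comp continuous_subtype_val)
    have hLW : ∀ y : ↥(N ω), (y : X) ∈ L ω → y ∈ Kᶜ := fun y hy => himg _ hy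
    -- `Kᶜ` is saturated, so its image is open
    have hsat : q ⁻¹' (q '' Kᶜ) = Kᶜ := by
      apply Set.Subset.antisymm
      · rintro x ⟨y, hyW, hyx⟩
        rcases Quotient.exact hyx with rfl | ⟨-, hxL⟩
        · exact hyW
        · exact hLW x hxL
      · exact Set.subset_preimage_image q Kᶜ
    have hopen : IsOpen (q '' Kᶜ) := by
      rw [← hqm.isOpen_preimage]
      show IsOpen (q ⁻¹' (q '' Kᶜ))
      rw [hsat]
      exact hKclosed.isOpen_compl
    refine mem_interior.2 ⟨q '' Kᶜ, ?_, hopen, ?_⟩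
    · rintro z ⟨y, hy, rfl⟩
      exact Set.mem_preimage.2 (by rw [hcomp y, hFbase y hy]; rfl)
    · exact ⟨⟨l ω, hLN ω (hl ω)⟩, hLW _ (hl ω), rfl⟩
end
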